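/- Let K be a field of characteristic different from 2 and let g be a finite-dimensional Lie algebra over K whose Killing form is nondegenerate. Then every anti-commuting linear map on g is zero; that is, if α : g → g is linear and ⁅α(x), y⁆ = ⁅α(y), x⁆ for all x, y ∈ g, then α = 0. -/

import Mathlib

/-- Over a field of characteristic ≠ 2, a finite-dimensional Lie algebra
with nondegenerate Killing form admits no nonzero anti-commuting linear map. -/
theorem stmt_3 {K : Type*} [Field K] (hchar : ringChar K ≠ 2)
    {g : Type*} [LieRing g] [LieAlgebra K g] [Module.Finite K g]
    (hKilling : (killingForm K g).Nondegenerate)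
    (α : g →ₗ[K] g) (hα : ∀ x y : g, ⁅α x, y⁆ = ⁅α y, x⁆) :
    α = 0 := by
  set B := killingForm K g with hB
  -- key invariance: B ⁅x,y⁆ z = B x ⁅y,z⁆
  have hinv : ∀ x y z : g, B ⁅x, y⁆ z = B x ⁅y, z⁆ := fun x y z =>
    LieModule.traceForm_apply_lie_apply K g g x y z
  -- symmetry in first two arguments of T x y z := B (α x) ⁅y,z⁆
  have hsym : ∀ x y z : g, B (α x) ⁅y, z⁆ = B (α y) ⁅x, z⁆ := by
    intro x y z
    rw [← hinv, hα, hinv]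
  -- antisymmetry in last two arguments
  have hanti : ∀ x y z : g, B (α x) ⁅y, z⁆ = - B (α x) ⁅z, y⁆ := by
    intro x y z
    rw [← lie_skew z y, map_neg, neg_neg]
  have hT : ∀ x y z : g, B (α x) ⁅y, z⁆ = 0 := by
    intro x y z
    have e : B (α x) ⁅y, z⁆ = - B (α x) ⁅y, z⁆ := by
      calc B (α x) ⁅y, z⁆ = B (α y) ⁅x, z⁆ := hsym x y z
        _ = -B (α y) ⁅z, x⁆ := hanti y x z
        _ = -B (α z) ⁅y, x⁆ := by rw [hsym y z x]
        _ = -(-B (α z) ⁅x, y⁆) := by rw [hanti z y x]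
        _ = -(-B (α x) ⁅z, y⁆) := by rw [hsym z x y]
        _ = -(-(-B (α x) ⁅y, z⁆)) := by rw [hanti x z y]
        _ = - B (α x) ⁅y, z⁆ := by ring
    have h2' : (2 : K) * B (α x) ⁅y, z⁆ = 0 := by linear_combination e
    have hne : (2 : K) ≠ 0 := Ring.two_ne_zero hchar
    exact (mul_eq_zero.mp h2').resolve_left hne
  -- hence ⁅α x, y⁆ = 0
  have hbr : ∀ x y : g, ⁅α x, y⁆ = 0 := by
    intro x y
    apply hKilling.1
    intro z
    rw [hinv]
    exact hT x y z
  -- hence α x is in the kernel of B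
  ext x
  apply hKilling.1
  intro z
  have had : LieAlgebra.ad K g (α x) = 0 := by
    ext y; simpa using hbr x y
  rw [killingForm_apply_apply, had]
  simp
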